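/- Assume chi = 1 (i.e. q2 = d*gamma) and eta > 0. For a real L >= 0 and tol in (0,1), set theta(L) = (1 + 1/(2*eta*(L+1)))^{-1} and define W(L,tol) = (C_alpha/(theta(L)*tol))^2 * (Q_W/((1-theta(L))*tol))^{1/(eta*(L+1))} * V_0^{1/(L+1)} * Q_S^{L/(L+1)} * (L+1)^2. If L(tol) is any function of tol such that (L(tol)+1)/log(1/tol) tends to 1/(2*eta) as tol -> 0+, then W(L(tol),tol)/(tol^{-2} * (log tol)^2) tends to C_alpha^2 * exp(2) * Q_S * (1/(2*eta))^2 as tol -> 0+. -/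

import Mathlib

open Filter

private lemma aux_log_lin (eta : ℝ) (heta : 0 < eta) :
    Tendsto (fun x : ℝ => Real.log (2 * eta * x + 1) / (eta * x)) atTop (nhds 0) := by
  have hu : Tendsto (fun x : ℝ => 2 * eta * x + 1) atTop atTop :=
    tendsto_atTop_add_const_right _ 1 (Tendsto.const_mul_atTop (by positivity) tendsto_id)
  have h0 : Tendsto (fun y : ℝ => Real.log y / y) atTop (nhds 0) :=
    Real.isLittleO_log_id_atTop.tendsto_div_nhds_zero
  have h1 : Tendsto (fun x : ℝ => Real.log (2 * eta * x + 1) / (2 * eta * x + 1))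
      atTop (nhds 0) := h0.comp hu
  have h2 : Tendsto (fun x : ℝ => (2 * eta * x + 1) / (eta * x)) atTop (nhds 2) := by
    have hinv : Tendsto (fun x : ℝ => (eta * x)⁻¹) atTop (nhds 0) :=
      tendsto_inv_atTop_zero.comp (Tendsto.const_mul_atTop heta tendsto_id)
    have h := (tendsto_const_nhds (x := (2:ℝ)) (f := atTop)).add hinv
    rw [add_zero] at h
    refine h.congr' ?_
    filter_upwards [eventually_gt_atTop (0:ℝ)] with x hx
    have hx' : eta * x ≠ 0 := by positivity
    field_simp
  have h3 := h1.mul h2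
  rw [zero_mul] at h3
  refine h3.congr' ?_
  filter_upwards [eventually_gt_atTop (0:ℝ)] with x hx
  have hx1 : (2 * eta * x + 1) ≠ 0 := by positivity
  have hx' : eta * x ≠ 0 := by positivity
  field_simp

/-- Corollary 2.1 (χ = 1): with the optimal splitting `θ(L)`, if
`(L(tol)+1)/log(1/tol) → 1/(2η)` as `tol → 0⁺`, then the optimal total work
satisfies `W(L(tol),tol)/(tol⁻² (log tol)²) → C_α² e² Q_S (1/(2η))²`. -/
theorem mlmc_asymptotic_work_chi_eq_one
    (d γ q1 q2 eta Q_W Q_S V0 C_alpha : ℝ)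
    (hd : 0 < d) (hγ : 0 < γ) (hq1 : 0 < q1) (hq2 : 0 < q2)
    (hchi : q2 = d * γ) (heta : eta = q1 / (d * γ)) (heta_pos : 0 < eta)
    (hQW : 0 < Q_W) (hQS : 0 < Q_S) (hV0 : 0 < V0) (hCα : 0 < C_alpha)
    (θ : ℝ → ℝ) (hθ : ∀ L : ℝ, θ L = (1 + 1 / (2 * eta * (L + 1)))⁻¹)
    (W : ℝ → ℝ → ℝ)
    (hW : ∀ L tol : ℝ, W L tol =
      (C_alpha / (θ L * tol)) ^ 2
        * (Q_W / ((1 - θ L) * tol)) ^ (1 / (eta * (L + 1)))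
        * V0 ^ (1 / (L + 1)) * Q_S ^ (L / (L + 1)) * (L + 1) ^ 2)
    (Lf : ℝ → ℝ) (hLf : ∀ tol ∈ Set.Ioo (0 : ℝ) 1, 0 ≤ Lf tol)
    (hLlim : Tendsto (fun tol => (Lf tol + 1) / Real.log (1 / tol))
      (nhdsWithin 0 (Set.Ioi 0)) (nhds (1 / (2 * eta)))) :
    Tendsto (fun tol => W (Lf tol) tol / (tol ^ (-2 : ℝ) * Real.log tol ^ 2))
      (nhdsWithin 0 (Set.Ioi 0))
      (nhds (C_alpha ^ 2 * Real.exp 2 * Q_S * (1 / (2 * eta)) ^ 2)) := by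
  set F := nhdsWithin (0:ℝ) (Set.Ioi 0) with hF
  -- basic eventual facts
  have hmem : ∀ᶠ t in F, t ∈ Set.Ioi (0:ℝ) := self_mem_nhdsWithin
  have hlt1 : ∀ᶠ t in F, t < 1 := by
    have h1 : Set.Iio (1:ℝ) ∈ F := nhdsWithin_le_nhds (Iio_mem_nhds one_pos)
    filter_upwards [h1] with t ht using ht
  have hM0 : ∀ᶠ t in F, 0 ≤ Lf t := by
    filter_upwards [hmem, hlt1] with t ht h1 using hLf t ⟨ht, h1⟩
  have hlpos : ∀ᶠ t in F, 0 < Real.log (1 / t) := by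
    filter_upwards [hmem, hlt1] with t ht h1
    exact Real.log_pos (one_lt_one_div ht h1)
  -- log(1/t) → ∞
  have hltop : Tendsto (fun t : ℝ => Real.log (1 / t)) F atTop := by
    have h := tendsto_neg_atBot_atTop.comp Real.tendsto_log_nhdsGT_zero
    refine h.congr fun t => ?_
    simp [Function.comp, one_div, Real.log_inv]
  -- (Lf t + 1) → ∞
  have hMtop : Tendsto (fun t => Lf t + 1) F atTop := by
    have hpos : (0:ℝ) < 1 / (2 * eta) := by positivity
    have h := hLlim.pos_mul_atTop hpos hltop
    refine h.congr' ?_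
    filter_upwards [hlpos] with t hl
    exact div_mul_cancel₀ _ hl.ne'
  have hηMtop : Tendsto (fun t => eta * (Lf t + 1)) F atTop :=
    Tendsto.const_mul_atTop heta_pos hMtop
  have h2ηMtop : Tendsto (fun t => 2 * eta * (Lf t + 1)) F atTop :=
    Tendsto.const_mul_atTop (by positivity) hMtop
  have hinvM : Tendsto (fun t => (Lf t + 1)⁻¹) F (nhds 0) :=
    tendsto_inv_atTop_zero.comp hMtop
  have hinvηM : Tendsto (fun t => (eta * (Lf t + 1))⁻¹) F (nhds 0) :=
    tendsto_inv_atTop_zero.comp hηMtop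
  have hinv2ηM : Tendsto (fun t => (2 * eta * (Lf t + 1))⁻¹) F (nhds 0) :=
    tendsto_inv_atTop_zero.comp h2ηMtop
  -- log(1/t)/(Lf t + 1) → 2η
  have hloM : Tendsto (fun t => Real.log (1 / t) / (Lf t + 1)) F (nhds (2 * eta)) := by
    have h := hLlim.inv₀ (by positivity : (1 / (2 * eta)) ≠ 0)
    rw [one_div, inv_inv] at h
    exact h.congr fun t => by rw [inv_div]
  -- factor A
  have hA : Tendsto (fun t => C_alpha ^ 2 * (1 + 1 / (2 * eta * (Lf t + 1))) ^ 2)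
      F (nhds (C_alpha ^ 2)) := by
    have h : Tendsto (fun t => 1 + 1 / (2 * eta * (Lf t + 1))) F (nhds 1) := by
      have h := (tendsto_const_nhds (x := (1:ℝ)) (f := F)).add hinv2ηM
      rw [add_zero] at h
      exact h.congr fun t => by rw [one_div]
    have h2 := (h.pow 2).const_mul (C_alpha ^ 2)
    simpa using h2
  -- factor B
  have hB1 : Tendsto (fun t => Real.log Q_W / (eta * (Lf t + 1))) F (nhds 0) := by
    have h := hinvηM.const_mul (Real.log Q_W)
    rw [mul_zero] at h
    exact h.congr fun t => by rw [div_eq_mul_inv]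
  have hB2 : Tendsto (fun t => Real.log (2 * eta * (Lf t + 1) + 1) / (eta * (Lf t + 1)))
      F (nhds 0) := by
    have h := (aux_log_lin eta heta_pos).comp hMtop
    exact h.congr fun t => rfl
  have hB3 : Tendsto (fun t => Real.log (1 / t) / (eta * (Lf t + 1))) F (nhds 2) := by
    have h := hloM.const_mul eta⁻¹
    have he : eta⁻¹ * (2 * eta) = 2 := by field_simp
    rw [he] at h
    exact h.congr fun t => by rw [inv_mul_eq_div, div_div, mul_comm]
  have hB : Tendsto (fun t => Real.exp (Real.log Q_W / (eta * (Lf t + 1))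
      + Real.log (2 * eta * (Lf t + 1) + 1) / (eta * (Lf t + 1))
      + Real.log (1 / t) / (eta * (Lf t + 1)))) F (nhds (Real.exp 2)) := by
    have h := (hB1.add hB2).add hB3
    rw [add_zero, zero_add] at h
    exact (Real.continuous_exp.tendsto 2).comp h
  -- factor C
  have hC : Tendsto (fun t => Real.exp (Real.log V0 / (Lf t + 1))) F (nhds 1) := by
    have h : Tendsto (fun t => Real.log V0 / (Lf t + 1)) F (nhds 0) := by
      have h := hinvM.const_mul (Real.log V0)
      rw [mul_zero] at h
      exact h.congr fun t => by rw [div_eq_mul_inv]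
    have h2 := (Real.continuous_exp.tendsto 0).comp h
    simpa [Function.comp_def] using h2
  -- factor D
  have hD : Tendsto (fun t => Real.exp (Lf t / (Lf t + 1) * Real.log Q_S)) F (nhds Q_S) := by
    have h1 : Tendsto (fun t => Lf t / (Lf t + 1)) F (nhds 1) := by
      have h := (tendsto_const_nhds (x := (1:ℝ)) (f := F)).sub hinvM
      rw [sub_zero] at h
      refine h.congr' ?_
      filter_upwards [hM0] with t ht
      have hM : Lf t + 1 ≠ 0 := by positivity
      field_simp
      ring
    have h2 := h1.mul_const (Real.log Q_S)
    rw [one_mul] at h2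
    have h3 := (Real.continuous_exp.tendsto _).comp h2
    simpa [Function.comp_def, Real.exp_log hQS] using h3
  -- factor E
  have hE : Tendsto (fun t => ((Lf t + 1) / Real.log (1 / t)) ^ 2)
      F (nhds ((1 / (2 * eta)) ^ 2)) := hLlim.pow 2
  -- combine
  have hProd := (((hA.mul hB).mul hC).mul hD).mul hE
  rw [mul_one] at hProd
  refine hProd.congr' ?_
  filter_upwards [hmem, hlt1, hM0] with t ht0 ht1 hL0
  have ht0' : (0:ℝ) < t := ht0
  have hMpos : (0:ℝ) < Lf t + 1 := by linarith
  have h2ηM : (0:ℝ) < 2 * eta * (Lf t + 1) := by positivity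
  have hθpos : 0 < θ (Lf t) := by rw [hθ]; positivity
  have h1θ : 1 - θ (Lf t) = (2 * eta * (Lf t + 1) + 1)⁻¹ := by
    rw [hθ]
    rw [eq_comm, inv_eq_iff_eq_inv, eq_comm]
    field_simp
    ring
  have hltneg : Real.log t < 0 := Real.log_neg ht0' ht1
  have hrw2 : t ^ (-2:ℝ) = (t ^ 2)⁻¹ := by
    rw [Real.rpow_neg ht0'.le, show ((2:ℝ)) = ((2:ℕ):ℝ) by norm_num, Real.rpow_natCast]
  have hbase : 0 < Q_W / ((1 - θ (Lf t)) * t) := by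
    rw [h1θ]; positivity
  have hE2 : (Q_W / ((1 - θ (Lf t)) * t)) ^ (1 / (eta * (Lf t + 1)))
      = Real.exp (Real.log Q_W / (eta * (Lf t + 1))
        + Real.log (2 * eta * (Lf t + 1) + 1) / (eta * (Lf t + 1))
        + Real.log (1 / t) / (eta * (Lf t + 1))) := by
    rw [Real.rpow_def_of_pos hbase]
    congr 1
    rw [h1θ, Real.log_div hQW.ne' (by positivity),
      Real.log_mul (by positivity) ht0'.ne', Real.log_inv, one_div t, Real.log_inv]
    ring
  have hE3 : V0 ^ (1 / (Lf t + 1)) = Real.exp (Real.log V0 / (Lf t + 1)) := by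
    rw [Real.rpow_def_of_pos hV0]
    congr 1
    ring
  have hE4 : Q_S ^ (Lf t / (Lf t + 1)) = Real.exp (Lf t / (Lf t + 1) * Real.log Q_S) := by
    rw [Real.rpow_def_of_pos hQS]
    congr 1
    ring
  rw [hW, hE2, hE3, hE4, hrw2, hθ]
  have hc : (0:ℝ) < 1 + 1 / (2 * eta * (Lf t + 1)) := by positivity
  rw [one_div t, Real.log_inv]
  have hcne : (1 + 1 / (2 * eta * (Lf t + 1))) ≠ 0 := hc.ne'
  have hlne : Real.log t ≠ 0 := hltneg.ne
  have htne : t ≠ 0 := ht0'.ne'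
  field_simp
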